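/- Let n ≥ 2 and let a : {1,…,n} → ℤ be a verifying imbalance with the left pan lighter that is not tight, i.e., Σ_{i=1}^n i·a(i) ≤ −2 and Σ_{i=1}^n i·a(σ(i)) ≥ 0 for every permutation σ ≠ id. Then there exists a downhill weighing b : {1,…,n} → ℤ (b(1) > … > b(n)) with Σ_{i=1}^n i·b(i) ∈ {0, −1} of strictly smaller total weight: Σ_{i=1}^n i·|b(i)| < Σ_{i=1}^n i·|a(i)|. In other words, the smallest total weight cannot be achieved by a downhill imbalance that is not tight. -/

import Mathlib

namespace NotTightAux

variable {n : ℕ}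

def Gaps (a : Fin n → ℤ) (t : ℤ) : Prop :=
  ∀ i j : Fin n, (j : ℕ) = (i : ℕ) + 1 → t ≤ a i - a j

lemma sum_update_mul (f a : Fin n → ℤ) (q : Fin n) (v : ℤ) :
    ∑ i, f i * (Function.update a q v) i = (∑ i, f i * a i) + f q * (v - a q) := by
  have h : ∀ i : Fin n, f i * (Function.update a q v) i
      = f i * a i + (if i = q then f q * (v - a q) else 0) := by
    intro i
    rcases eq_or_ne i q with rfl | h
    · simp; ring
    · simp [Function.update_of_ne h, h]
  rw [Finset.sum_congr rfl fun i _ => h i, Finset.sum_add_distrib,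
    Finset.sum_ite_eq' Finset.univ q]
  simp

lemma sum_abs_update_mul (f a : Fin n → ℤ) (q : Fin n) (v : ℤ) :
    ∑ i, f i * |(Function.update a q v) i| = (∑ i, f i * |a i|) + f q * (|v| - |a q|) := by
  have h : ∀ i : Fin n, |(Function.update a q v) i| = (Function.update (fun i => |a i|) q |v|) i := by
    intro i
    rcases eq_or_ne i q with rfl | h
    · simp
    · simp [Function.update_of_ne h]
  rw [Finset.sum_congr rfl fun i _ => by rw [h i]]
  exact sum_update_mul f (fun i => |a i|) q |v|

lemma gaps_chain (a : Fin n → ℤ) (t : ℤ) (hg : Gaps a t) :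
    ∀ d : ℕ, ∀ i j : Fin n, (j : ℕ) = (i : ℕ) + d → a j + t * d ≤ a i := by
  intro d
  induction d with
  | zero =>
    intro i j h
    have : j = i := Fin.ext (by omega)
    subst this; simp
  | succ d ih =>
    intro i j h
    have hm : (i : ℕ) + d < n := by omega
    have h1 := ih i ⟨(i : ℕ) + d, hm⟩ rfl
    have h2 := hg ⟨(i : ℕ) + d, hm⟩ j (by show (j : ℕ) = (i : ℕ) + d + 1; omega)
    push_cast
    push_cast at h1
    linarith

lemma gaps_mono (a : Fin n → ℤ) {t t' : ℤ} (h : t' ≤ t) (hg : Gaps a t) : Gaps a t' :=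
  fun i j hij => le_trans h (hg i j hij)

lemma lt_of_gaps (b : Fin n → ℤ) (hg : Gaps b 1) {i j : Fin n} (h : i < j) : b j < b i := by
  have hd := gaps_chain b 1 hg ((j : ℕ) - (i : ℕ)) i j (by omega)
  have h1 : (1 : ℤ) ≤ (((j : ℕ) - (i : ℕ) : ℕ) : ℤ) := by
    have : (i : ℕ) < j := h
    omega
  nlinarith

lemma gaps_update1 (a : Fin n → ℤ) (t : ℤ) (hg : Gaps a t) (q : Fin n) :
    Gaps (Function.update a q (a q + 1)) (t - 1) := by
  intro i j hij
  have h0 := hg i j hij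
  have hne : i ≠ j := by
    intro h; subst h; omega
  simp only [Function.update_apply]
  split_ifs with h1 h2 h2
  · subst h1; exact absurd h2.symm hne
  · subst h1; omega
  · subst h2; omega
  · omega

lemma gaps_update2 (a : Fin n → ℤ) (t : ℤ) (hg : Gaps a t) (p q : Fin n)
    (hpq : (p : ℕ) + 2 ≤ (q : ℕ)) :
    Gaps (Function.update (Function.update a p (a p - 1)) q (a q + 1)) (t - 1) := by
  have hqp : q ≠ p := by intro h; subst h; omega
  intro i j hij
  have h0 := hg i j hij
  simp only [Function.update_apply]
  have hvpq : (Function.update a p (a p - 1)) q = a q := by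
    rw [Function.update_of_ne hqp]
  split_ifs with h1 h2 h3 h4 h5 h6 h7
  all_goals (try subst h1); (try subst h2); (try subst h3); (try subst h4)
  all_goals simp_all [Fin.ext_iff]
  all_goals omega

lemma last_neg (hn : 2 ≤ n) (a : Fin n → ℤ) (t : ℤ) (ht : 2 ≤ t)
    (hS : ∑ i : Fin n, ((i : ℤ) + 1) * a i = -t) (hg : Gaps a t)
    (L : Fin n) (hL : (L : ℕ) = n - 1) :
    a L ≤ -1 := by
  by_contra hc
  push_neg at hc
  have hc' : 0 ≤ a L := by omega
  have hpos : ∀ i : Fin n, 0 ≤ a i := by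
    intro i
    have hch := gaps_chain a t hg (n - 1 - (i : ℕ)) i L (by omega)
    have h2 : (0:ℤ) ≤ t * ((n - 1 - (i : ℕ) : ℕ) : ℤ) :=
      mul_nonneg (by omega) (by positivity)
    linarith
  have : (0:ℤ) ≤ ∑ i : Fin n, ((i : ℤ) + 1) * a i :=
    Finset.sum_nonneg fun i _ => mul_nonneg (by positivity) (hpos i)
  omega

lemma first_pos (hn : 2 ≤ n) (a : Fin n → ℤ) (t : ℤ) (ht : 2 ≤ t)
    (hS : ∑ i : Fin n, ((i : ℤ) + 1) * a i = -t) (hg : Gaps a t)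
    (Z : Fin n) (hZ : (Z : ℕ) = 0) :
    1 ≤ a Z := by
  by_contra hc
  push_neg at hc
  have hc' : a Z ≤ 0 := by omega
  have hub : ∀ i : Fin n, a i ≤ -(t * (i : ℤ)) := by
    intro i
    have hch := gaps_chain a t hg (i : ℕ) Z i (by omega)
    push_cast at hch
    linarith
  have hsum : (∑ i : Fin n, ((i : ℤ) + 1) * a i)
      ≤ ∑ i : Fin n, ((i : ℤ) + 1) * (-(t * (i : ℤ))) :=
    Finset.sum_le_sum fun i _ => mul_le_mul_of_nonneg_left (hub i) (by positivity)
  have heq : ∑ i : Fin n, ((i : ℤ) + 1) * (-(t * (i : ℤ)))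
      = -t * ∑ i : Fin n, (i : ℤ) * ((i : ℤ) + 1) := by
    rw [Finset.mul_sum]
    exact Finset.sum_congr rfl fun i _ => by ring
  have hU : 2 ≤ ∑ i : Fin n, (i : ℤ) * ((i : ℤ) + 1) := by
    have h1 : ((((⟨1, by omega⟩ : Fin n)) : ℤ) * ((((⟨1, by omega⟩ : Fin n)) : ℤ) + 1)) = 2 := by
      norm_num
    calc (2:ℤ) = (((⟨1, by omega⟩ : Fin n)) : ℤ) * ((((⟨1, by omega⟩ : Fin n)) : ℤ) + 1) := h1.symm
    _ ≤ _ := Finset.single_le_sum (f := fun i : Fin n => (i : ℤ) * ((i : ℤ) + 1))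
        (fun i _ => mul_nonneg (by positivity) (by positivity)) (Finset.mem_univ _)
  rw [hS, heq] at hsum
  nlinarith

lemma move1_package (a : Fin n → ℤ) (t : ℤ) (hg : Gaps a t) (q : Fin n) (haq : a q ≤ -1) :
    ∃ b : Fin n → ℤ, Gaps b (t - 1) ∧
      (∑ i : Fin n, ((i : ℤ) + 1) * b i = (∑ i : Fin n, ((i : ℤ) + 1) * a i) + ((q : ℤ) + 1)) ∧
      (∑ i : Fin n, ((i : ℤ) + 1) * |b i|
        = (∑ i : Fin n, ((i : ℤ) + 1) * |a i|) - ((q : ℤ) + 1)) := by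
  refine ⟨Function.update a q (a q + 1), gaps_update1 a t hg q, ?_, ?_⟩
  · rw [sum_update_mul (fun i : Fin n => (i : ℤ) + 1) a q (a q + 1)]
    ring
  · rw [sum_abs_update_mul (fun i : Fin n => (i : ℤ) + 1) a q (a q + 1)]
    have h1 : |a q + 1| = -(a q) - 1 := by rw [abs_of_nonpos (by omega)]; ring
    have h2 : |a q| = -(a q) := abs_of_nonpos (by omega)
    rw [h1, h2]; ring

lemma move2_package (a : Fin n → ℤ) (t : ℤ) (hg : Gaps a t) (p q : Fin n)
    (hpq : (p : ℕ) + 2 ≤ (q : ℕ)) (hap : 1 ≤ a p) (haq : a q ≤ -1) :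
    ∃ b : Fin n → ℤ, Gaps b (t - 1) ∧
      (∑ i : Fin n, ((i : ℤ) + 1) * b i
        = (∑ i : Fin n, ((i : ℤ) + 1) * a i) + ((q : ℤ) - (p : ℤ))) ∧
      (∑ i : Fin n, ((i : ℤ) + 1) * |b i|
        = (∑ i : Fin n, ((i : ℤ) + 1) * |a i|) - ((p : ℤ) + (q : ℤ) + 2)) := by
  have hqp : q ≠ p := by intro h; subst h; omega
  have hval : (Function.update a p (a p - 1)) q = a q := Function.update_of_ne hqp _ _
  refine ⟨Function.update (Function.update a p (a p - 1)) q (a q + 1),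
    gaps_update2 a t hg p q hpq, ?_, ?_⟩
  · rw [sum_update_mul (fun i : Fin n => (i : ℤ) + 1) _ q (a q + 1),
      sum_update_mul (fun i : Fin n => (i : ℤ) + 1) a p (a p - 1), hval]
    ring
  · rw [sum_abs_update_mul (fun i : Fin n => (i : ℤ) + 1) _ q (a q + 1),
      sum_abs_update_mul (fun i : Fin n => (i : ℤ) + 1) a p (a p - 1), hval]
    have h1 : |a q + 1| = -(a q) - 1 := by rw [abs_of_nonpos (by omega)]; ring
    have h2 : |a q| = -(a q) := abs_of_nonpos (by omega)
    have h3 : |a p - 1| = a p - 1 := abs_of_nonneg (by omega)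
    have h4 : |a p| = a p := abs_of_nonneg (by omega)
    rw [h1, h2, h3, h4]; ring

lemma key (hn : 2 ≤ n) (k : ℕ) :
    ∀ a : Fin n → ℤ, ∀ t : ℤ, (∑ i : Fin n, ((i : ℤ) + 1) * |a i|).toNat ≤ k →
      2 ≤ t → (∑ i : Fin n, ((i : ℤ) + 1) * a i = -t) → Gaps a t →
      ∃ b : Fin n → ℤ, (∀ i j : Fin n, i < j → b j < b i) ∧
        ((∑ i : Fin n, ((i : ℤ) + 1) * b i = 0) ∨ (∑ i : Fin n, ((i : ℤ) + 1) * b i = -1)) ∧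
        (∑ i : Fin n, ((i : ℤ) + 1) * |b i|) < (∑ i : Fin n, ((i : ℤ) + 1) * |a i|) := by
  induction k with
  | zero =>
    intro a t hW ht2 hSt hg
    exfalso
    have hL : ((⟨n - 1, by omega⟩ : Fin n) : ℕ) = n - 1 := rfl
    have hlast := last_neg hn a t ht2 hSt hg ⟨n - 1, by omega⟩ hL
    have h1 : (1 : ℤ) ≤ ((((⟨n - 1, by omega⟩ : Fin n)) : ℤ) + 1) * |a ⟨n - 1, by omega⟩| := by
      have : (1 : ℤ) ≤ |a ⟨n - 1, by omega⟩| := by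
        rw [abs_of_nonpos (by omega)]; omega
      nlinarith [Int.natCast_nonneg ((⟨n - 1, by omega⟩ : Fin n) : ℕ)]
    have h2 : (1 : ℤ) ≤ ∑ i : Fin n, ((i : ℤ) + 1) * |a i| :=
      le_trans h1 (Finset.single_le_sum
        (f := fun i : Fin n => ((i : ℤ) + 1) * |a i|)
        (fun i _ => mul_nonneg (by positivity) (abs_nonneg _)) (Finset.mem_univ _))
    omega
  | succ k ih =>
    intro a t hW ht2 hSt hg
    have hn0 : 0 < n := by omega
    set L : Fin n := ⟨n - 1, by omega⟩ with hLdef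
    have hL : (L : ℕ) = n - 1 := rfl
    have hlast : a L ≤ -1 := last_neg hn a t ht2 hSt hg L hL
    have hWnn : (0:ℤ) ≤ ∑ i : Fin n, ((i : ℤ) + 1) * |a i| :=
      Finset.sum_nonneg fun i _ => mul_nonneg (by positivity) (abs_nonneg _)
    rcases lt_or_ge ((n : ℤ) + 1) t with hbig | hsmall
    · -- recurse: add 1 at the last index
      obtain ⟨b, hbg, hbS, hbW⟩ := move1_package a t hg L hlast
      have hLZ : ((L : ℕ) : ℤ) = (n : ℤ) - 1 := by rw [hL]; omega
      have hbS' : ∑ i : Fin n, ((i : ℤ) + 1) * b i = -(t - n) := by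
        rw [hbS, hSt, hLZ]; ring
      have hbg' : Gaps b (t - n) := gaps_mono b (by omega) hbg
      have hbWnn : (0:ℤ) ≤ ∑ i : Fin n, ((i : ℤ) + 1) * |b i| :=
        Finset.sum_nonneg fun i _ => mul_nonneg (by positivity) (abs_nonneg _)
      have hWlt : (∑ i : Fin n, ((i : ℤ) + 1) * |b i|) < ∑ i : Fin n, ((i : ℤ) + 1) * |a i| := by
        rw [hbW]; omega
      have hWle : (∑ i : Fin n, ((i : ℤ) + 1) * |b i|).toNat ≤ k := by
        rw [hbW, hLZ]; omega
      obtain ⟨c, hc1, hc2, hc3⟩ := ih b (t - n) hWle (by omega) hbS' hbg'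
      exact ⟨c, hc1, hc2, lt_trans hc3 hWlt⟩
    · -- t ≤ n + 1
      set Z : Fin n := ⟨0, hn0⟩ with hZdef
      have hZv : (Z : ℕ) = 0 := rfl
      have ha0 : 1 ≤ a Z := first_pos hn a t ht2 hSt hg Z rfl
      -- j1 : least index with a j1 ≤ -1
      have hFne : (Finset.univ.filter (fun i : Fin n => a i ≤ -1)).Nonempty :=
        ⟨L, by simp [hlast]⟩
      set j1 : Fin n := (Finset.univ.filter (fun i : Fin n => a i ≤ -1)).min' hFne with hj1def
      have hj1neg : a j1 ≤ -1 := by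
        have := Finset.min'_mem _ hFne
        simpa using this
      have hj1min : ∀ i : Fin n, a i ≤ -1 → j1 ≤ i := fun i hi =>
        Finset.min'_le _ i (by simp [hi])
      have hj1nonneg : ∀ i : Fin n, (i : ℕ) < (j1 : ℕ) → 0 ≤ a i := by
        intro i hi
        by_contra hc
        push_neg at hc
        have h1 := hj1min i (by omega)
        have : (j1 : ℕ) ≤ (i : ℕ) := h1
        omega
      have hnegge : ∀ i : Fin n, (j1 : ℕ) ≤ (i : ℕ) → a i ≤ -1 := by
        intro i hi
        have hch := gaps_chain a t hg ((i : ℕ) - (j1 : ℕ)) j1 i (by omega)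
        have h2 : (0:ℤ) ≤ t * (((i : ℕ) - (j1 : ℕ) : ℕ) : ℤ) :=
          mul_nonneg (by omega) (by positivity)
        linarith
      have hj1pos : 1 ≤ (j1 : ℕ) := by
        by_contra hc
        have : j1 = Z := Fin.ext (by omega)
        rw [this] at hj1neg
        omega
      have hj1lt : (j1 : ℕ) < n := j1.isLt
      rcases lt_or_ge ((j1 : ℤ) + 1) t with hb2 | hb1
      · -- j1 + 2 ≤ t ≤ n + 1 : single move at index t - 2
        have hqlt : (t - 2).toNat < n := by omega
        set q : Fin n := ⟨(t - 2).toNat, hqlt⟩ with hqdef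
        have hqv : ((q : ℕ) : ℤ) = t - 2 := by
          show (((t - 2).toNat : ℕ) : ℤ) = t - 2
          omega
        have haq : a q ≤ -1 := hnegge q (by omega)
        obtain ⟨b, hbg, hbS, hbW⟩ := move1_package a t hg q haq
        refine ⟨b, fun i j hij => lt_of_gaps b (gaps_mono b (by omega) hbg) hij, ?_, ?_⟩
        · right; rw [hbS, hSt, hqv]; ring
        · rw [hbW]; omega
      · -- t ≤ j1 + 1
        rcases lt_or_ge 2 t with h3 | h2
        · -- 3 ≤ t : pair move (j1 - (t-1), j1)
          have hple : (t - 1).toNat ≤ (j1 : ℕ) := by omega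
          have hplt : (j1 : ℕ) - (t - 1).toNat < n := by omega
          set p : Fin n := ⟨(j1 : ℕ) - (t - 1).toNat, hplt⟩ with hpdef
          have hpv : ((p : ℕ) : ℤ) = (j1 : ℤ) - (t - 1) := by
            show ((((j1 : ℕ) - (t - 1).toNat : ℕ)) : ℤ) = (j1 : ℤ) - (t - 1)
            omega
          have hpqle : (p : ℕ) + 2 ≤ (j1 : ℕ) := by
            show (j1 : ℕ) - (t - 1).toNat + 2 ≤ (j1 : ℕ)
            omega
          -- a p ≥ 1
          set jm : Fin n := ⟨(j1 : ℕ) - 1, by omega⟩ with hjmdef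
          have hjm : 0 ≤ a jm := hj1nonneg jm (by show (j1:ℕ) - 1 < (j1:ℕ); omega)
          have hch := gaps_chain a t hg ((t - 2).toNat) p jm
            (by show (j1:ℕ) - 1 = ((j1 : ℕ) - (t - 1).toNat) + (t-2).toNat; omega)
          have hcast : (((t - 2).toNat : ℕ) : ℤ) = t - 2 := by omega
          rw [hcast] at hch
          have hap : 1 ≤ a p := by nlinarith
          obtain ⟨b, hbg, hbS, hbW⟩ := move2_package a t hg p j1 hpqle hap hj1neg
          refine ⟨b, fun i j hij => lt_of_gaps b (gaps_mono b (by omega) hbg) hij, ?_, ?_⟩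
          · right; rw [hbS, hSt, hpv]; ring
          · rw [hbW]
            have : (0:ℤ) ≤ (p : ℤ) := by positivity
            have : (0:ℤ) ≤ (j1 : ℤ) := by positivity
            omega
        · -- t = 2
          have ht2' : t = 2 := by omega
          rcases lt_or_ge 1 (j1 : ℕ) with hj2 | hj11
          · -- j1 ≥ 2 : pair move (j1 - 2, j1), target 0
            set p : Fin n := ⟨(j1 : ℕ) - 2, by omega⟩ with hpdef
            have hpv : ((p : ℕ) : ℤ) = (j1 : ℤ) - 2 := by
              show ((((j1 : ℕ) - 2 : ℕ)) : ℤ) = (j1 : ℤ) - 2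
              omega
            set jm : Fin n := ⟨(j1 : ℕ) - 1, by omega⟩ with hjmdef
            have hjm : 0 ≤ a jm := hj1nonneg jm (by show (j1:ℕ) - 1 < (j1:ℕ); omega)
            have hgap := hg p jm (by show (j1:ℕ) - 1 = (j1 : ℕ) - 2 + 1; omega)
            have hap : 1 ≤ a p := by omega
            have hpqle : (p : ℕ) + 2 ≤ (j1 : ℕ) := by
              show (j1 : ℕ) - 2 + 2 ≤ (j1 : ℕ); omega
            obtain ⟨b, hbg, hbS, hbW⟩ := move2_package a t hg p j1 hpqle hap hj1neg
            refine ⟨b, fun i j hij => lt_of_gaps b (gaps_mono b (by omega) hbg) hij, ?_, ?_⟩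
            · left; rw [hbS, hSt, hpv, ht2']; ring
            · rw [hbW]
              have : (0:ℤ) ≤ (p : ℤ) := by positivity
              have : (0:ℤ) ≤ (j1 : ℤ) := by positivity
              omega
          · -- j1 = 1
            have hj1eq : (j1 : ℕ) = 1 := by omega
            rcases lt_or_ge 2 n with hn3 | hn2
            · -- n ≥ 3 : pair move (0, 2), target 0
              set q : Fin n := ⟨2, hn3⟩ with hqdef
              have haq : a q ≤ -1 := hnegge q (by show (j1:ℕ) ≤ 2; omega)
              obtain ⟨b, hbg, hbS, hbW⟩ := move2_package a t hg Z q
                (by show (0:ℕ) + 2 ≤ 2; omega) ha0 haq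
              refine ⟨b, fun i j hij => lt_of_gaps b (gaps_mono b (by omega) hbg) hij, ?_, ?_⟩
              · left
                rw [hbS, hSt, ht2']
                show -2 + (((2:ℕ) : ℤ) - ((0:ℕ) : ℤ)) = 0
                norm_num
              · rw [hbW]
                show (∑ i : Fin n, ((i : ℤ) + 1) * |a i|) - (((0:ℕ):ℤ) + ((2:ℕ):ℤ) + 2)
                  < ∑ i : Fin n, ((i : ℤ) + 1) * |a i|
                omega
            · -- n = 2
              have hn2' : n = 2 := by omega
              subst hn2'
              clear ih hW hWnn
              have hZ0 : Z = (0 : Fin 2) := Fin.ext rfl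
              have hL1 : L = (1 : Fin 2) := Fin.ext rfl
              rw [hZ0] at ha0
              rw [hL1] at hlast
              have hs : ∀ c : Fin 2 → ℤ, ∑ i : Fin 2, ((i : ℤ) + 1) * c i
                  = c 0 + 2 * c 1 := by
                intro c
                rw [Fin.sum_univ_two]
                simp only [Fin.val_zero, Fin.val_one]
                push_cast
                ring
              have hS2 : a 0 + 2 * a 1 = -2 := by
                rw [hs] at hSt
                omega
              set b : Fin 2 → ℤ := ![a 0 - 1, a 1 + 1] with hbdef
              have hb0 : b 0 = a 0 - 1 := rfl
              have hb1 : b 1 = a 1 + 1 := rfl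
              refine ⟨b, ?_, ?_, ?_⟩
              · intro i j hij
                have hij' : (i : ℕ) < (j : ℕ) := hij
                have hjlt : (j : ℕ) < 2 := j.isLt
                have hi : i = 0 := Fin.ext (by simp only [Fin.val_zero]; omega)
                have hj : j = 1 := Fin.ext (by simp only [Fin.val_one]; omega)
                subst hi; subst hj
                rw [hb0, hb1]
                omega
              · right
                rw [hs b, hb0, hb1]
                omega
              · rw [hs (fun i => |b i|), hs (fun i => |a i|)]
                simp only [hb0, hb1]
                have e1 : |a 0 - 1| = a 0 - 1 := abs_of_nonneg (by omega)
                have e2 : |a 1 + 1| = -(a 1 + 1) := abs_of_nonpos (by omega)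
                have e3 : |a 0| = a 0 := abs_of_nonneg (by omega)
                have e4 : |a 1| = -(a 1) := abs_of_nonpos (by omega)
                rw [e1, e2, e3, e4]
                omega

end NotTightAux

open NotTightAux in
/-- The smallest total weight cannot be achieved by a (verifying, hence
downhill) imbalance that is not tight: some downhill balance or tight
imbalance has strictly smaller total weight. -/
theorem not_tight_not_weight_optimal (n : ℕ) (hn : 2 ≤ n) (a : Fin n → ℤ)
    (hS : ∑ i : Fin n, ((i : ℤ) + 1) * a i ≤ -2)
    (hver : ∀ σ : Equiv.Perm (Fin n), σ ≠ 1 →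
      0 ≤ ∑ i : Fin n, ((i : ℤ) + 1) * a (σ i)) :
    ∃ b : Fin n → ℤ, (∀ i j : Fin n, i < j → b j < b i) ∧
      (∑ i : Fin n, ((i : ℤ) + 1) * b i = 0 ∨
        ∑ i : Fin n, ((i : ℤ) + 1) * b i = -1) ∧
      ∑ i : Fin n, ((i : ℤ) + 1) * |b i| < ∑ i : Fin n, ((i : ℤ) + 1) * |a i| := by
  have hg : Gaps a (-(∑ i : Fin n, ((i : ℤ) + 1) * a i)) := by
    intro i j hij
    have hne : i ≠ j := by
      intro h; subst h; omega
    have hswapne : Equiv.swap i j ≠ 1 := by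
      intro h
      have h2 : Equiv.swap i j i = i := by rw [h]; rfl
      rw [Equiv.swap_apply_left] at h2
      exact hne h2.symm
    have h0 := hver _ hswapne
    have hpt : ∀ k : Fin n, a (Equiv.swap i j k)
        = Function.update (Function.update a i (a j)) j (a i) k := by
      intro k
      rcases eq_or_ne k i with rfl | hki
      · rw [Equiv.swap_apply_left, Function.update_of_ne hne,
          Function.update_self]
      · rcases eq_or_ne k j with rfl | hkj
        · rw [Equiv.swap_apply_right, Function.update_self]
        · rw [Equiv.swap_apply_of_ne_of_ne hki hkj,
            Function.update_of_ne hkj, Function.update_of_ne hki]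
    have hsum : ∑ k : Fin n, ((k : ℤ) + 1) * a (Equiv.swap i j k)
        = (∑ k : Fin n, ((k : ℤ) + 1) * a k) + ((j : ℤ) - (i : ℤ)) * (a i - a j) := by
      rw [Finset.sum_congr rfl fun k _ => by rw [hpt k]]
      rw [sum_update_mul (fun k : Fin n => (k : ℤ) + 1) _ j (a i),
        sum_update_mul (fun k : Fin n => (k : ℤ) + 1) a i (a j)]
      rw [Function.update_of_ne (Ne.symm hne)]
      ring
    rw [hsum] at h0
    have hji : ((j : ℤ) - (i : ℤ)) = 1 := by
      omega
    rw [hji, one_mul] at h0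
    linarith
  exact key hn (∑ i : Fin n, ((i : ℤ) + 1) * |a i|).toNat a
    (-(∑ i : Fin n, ((i : ℤ) + 1) * a i)) le_rfl (by omega) (by ring) hg
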